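/- arXiv:2109.14329 — 2 statements merged into one kernel-verified Lean document; each statement's English description precedes it below -/
import Mathlib

section
/- Let λ_1, ..., λ_m be independent random variables, each taking values in {−1, +1}, with P(λ_j = +1) = p_j ∈ [0,1]. Set u₁ = Σ_{j=1}^m p_j, u₂ = 2u₁ − m, and assume u₁ > 0 and u₂ ≥ 0. Then for every δ ≥ 0, with y = (m + (1+δ)u₂)/(2u₁) = 1 + δ(1 − m/(2u₁)), one has P(Σ_{j=1}^m λ_j ≥ (1+δ) u₂) ≤ exp(u₁ (y(1 − ln y) − 1)). -/
open MeasureTheory ProbabilityTheory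

/-- Optimized upper-tail Chernoff bound (Theorem 2, case
`s_w ≥ 0`): for independent ±1-valued `λ_j` with `P(λ_j = +1) = p_j`,
`u₁ = ∑ p_j > 0`, `u₂ = 2u₁ − m ≥ 0`, and any `δ ≥ 0`, setting
`y = (m + (1+δ)u₂)/(2u₁)`, one has
`P(∑ λ_j ≥ (1+δ)u₂) ≤ exp(u₁ (y(1 − ln y) − 1))`. -/
theorem stmt_5 {Ω : Type*} [MeasurableSpace Ω] (P : Measure Ω) [IsProbabilityMeasure P]
    (m : ℕ) (L : Fin m → Ω → ℝ) (hLmeas : ∀ j, Measurable (L j))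
    (hindep : iIndepFun L P)
    (hval : ∀ j ω, L j ω = 1 ∨ L j ω = -1)
    (p : Fin m → ℝ) (hp : ∀ j, p j ∈ Set.Icc (0 : ℝ) 1)
    (hP : ∀ j, P {ω | L j ω = 1} = ENNReal.ofReal (p j))
    (u₁ u₂ : ℝ) (hu₁ : u₁ = ∑ j, p j) (hu₁pos : 0 < u₁)
    (hu₂ : u₂ = 2 * u₁ - m) (hu₂nonneg : 0 ≤ u₂)
    (δ : ℝ) (hδ : 0 ≤ δ)
    (y : ℝ) (hy : y = ((m : ℝ) + (1 + δ) * u₂) / (2 * u₁)) :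
    P {ω | (1 + δ) * u₂ ≤ ∑ j, L j ω}
      ≤ ENNReal.ofReal (Real.exp (u₁ * (y * (1 - Real.log y) - 1))) := by
  classical
  have htwo : (0:ℝ) < 2 * u₁ := by linarith
  set a : ℝ := (1 + δ) * u₂ with ha
  have hanneg : 0 ≤ a := mul_nonneg (by linarith) hu₂nonneg
  have hsum : (m:ℝ) + a = 2 * u₁ * y := by
    rw [hy]; field_simp
  have hy1 : (1:ℝ) ≤ y := by
    rw [hy, le_div_iff₀ htwo]
    nlinarith
  have hypos : (0:ℝ) < y := lt_of_lt_of_le one_pos hy1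
  set t : ℝ := Real.log y / 2 with htdef
  have ht : 0 ≤ t := div_nonneg (Real.log_nonneg hy1) (by norm_num)
  have he2t : Real.exp (2 * t) = y := by
    rw [htdef]
    rw [show 2 * (Real.log y / 2) = Real.log y by ring, Real.exp_log hypos]
  have hA : ∀ j, MeasurableSet {ω | L j ω = 1} := fun j =>
    hLmeas j (measurableSet_singleton 1)
  have hfun : ∀ j, (fun ω => Real.exp (t * L j ω))
      = fun ω => Set.indicator {ω | L j ω = 1} (fun _ => Real.exp t) ω
        + Set.indicator {ω | L j ω = 1}ᶜ (fun _ => Real.exp (-t)) ω := by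
    intro j
    funext ω
    rcases hval j ω with h | h <;>
      norm_num [Set.indicator_apply, Set.mem_setOf_eq, h]
  have hint : ∀ j, Integrable (fun ω => Real.exp (t * L j ω)) P := by
    intro j
    rw [hfun j]
    exact ((integrable_const _).indicator (hA j)).add
      ((integrable_const _).indicator (hA j).compl)
  have hmgf : ∀ j, mgf (L j) P t = p j * Real.exp t + (1 - p j) * Real.exp (-t) := by
    intro j
    have hpj := hp j
    have hPA : (P {ω | L j ω = 1}).toReal = p j := by
      rw [hP j, ENNReal.toReal_ofReal hpj.1]
    have hPAc : (P {ω | L j ω = 1}ᶜ).toReal = 1 - p j := by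
      rw [measure_compl (hA j) (measure_ne_top _ _), measure_univ, hP j,
        ENNReal.toReal_sub_of_le (ENNReal.ofReal_le_one.mpr hpj.2) ENNReal.one_ne_top,
        ENNReal.toReal_one, ENNReal.toReal_ofReal hpj.1]
    simp only [mgf]
    rw [hfun j, integral_add ((integrable_const _).indicator (hA j))
        ((integrable_const _).indicator (hA j).compl),
      integral_indicator_const _ (hA j), integral_indicator_const _ (hA j).compl,
      measureReal_def, measureReal_def, hPA, hPAc, smul_eq_mul, smul_eq_mul]
  have hbound : ∀ j, mgf (L j) P t ≤ Real.exp (-t) * Real.exp (p j * (y - 1)) := by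
    intro j
    rw [hmgf j]
    have hexp : Real.exp (-t) * Real.exp (2 * t) = Real.exp t := by
      rw [← Real.exp_add]; ring_nf
    have h1 : p j * Real.exp t + (1 - p j) * Real.exp (-t)
        = Real.exp (-t) * (1 + p j * (Real.exp (2 * t) - 1)) := by
      rw [← hexp]; ring
    rw [h1, he2t]
    exact mul_le_mul_of_nonneg_left
      (by linarith [Real.add_one_le_exp (p j * (y - 1))]) (Real.exp_nonneg _)
  have hprod : ∏ j, mgf (L j) P t ≤ Real.exp (-(m:ℝ) * t) * Real.exp (u₁ * (y - 1)) := by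
    calc ∏ j, mgf (L j) P t ≤ ∏ j, (Real.exp (-t) * Real.exp (p j * (y - 1))) :=
          Finset.prod_le_prod (fun j _ => mgf_nonneg) (fun j _ => hbound j)
      _ = Real.exp (-(m:ℝ) * t) * Real.exp (u₁ * (y - 1)) := by
          rw [Finset.prod_mul_distrib, Finset.prod_const, Finset.card_univ, Fintype.card_fin,
            ← Real.exp_nat_mul, ← Real.exp_sum, ← Finset.sum_mul, ← hu₁]
          congr 1
          ring
  have hS : Integrable (fun ω => Real.exp (t * ∑ j, L j ω)) P := by
    apply Integrable.mono' (integrable_const (Real.exp (t * m)))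
    · exact (((Finset.univ.measurable_sum fun j _ => hLmeas j).const_mul t).exp).aestronglyMeasurable
    · filter_upwards with ω
      rw [Real.norm_eq_abs, abs_of_pos (Real.exp_pos _)]
      apply Real.exp_le_exp.mpr
      apply mul_le_mul_of_nonneg_left _ ht
      calc ∑ j, L j ω ≤ ∑ _j : Fin m, (1:ℝ) :=
            Finset.sum_le_sum (fun j _ => by rcases hval j ω with h | h <;> rw [h] <;> norm_num)
        _ = m := by simp
  have hreal : (P {ω | a ≤ ∑ j, L j ω}).toReal
      ≤ Real.exp (u₁ * (y * (1 - Real.log y) - 1)) := by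
    calc (P {ω | a ≤ ∑ j, L j ω}).toReal
        ≤ Real.exp (-t * a) * mgf (fun ω => ∑ j, L j ω) P t :=
          measure_ge_le_exp_mul_mgf a ht hS
      _ = Real.exp (-t * a) * ∏ j, mgf (L j) P t := by
          congr 1
          rw [show (fun ω => ∑ j, L j ω) = ∑ j, L j from
            funext fun ω => (Finset.sum_apply ω Finset.univ L).symm]
          exact hindep.mgf_sum hLmeas Finset.univ
      _ ≤ Real.exp (-t * a) * (Real.exp (-(m:ℝ) * t) * Real.exp (u₁ * (y - 1))) :=
          mul_le_mul_of_nonneg_left hprod (Real.exp_nonneg _)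
      _ = Real.exp (u₁ * (y * (1 - Real.log y) - 1)) := by
          rw [← Real.exp_add, ← Real.exp_add]
          congr 1
          have htt : t = Real.log y / 2 := htdef
          nlinarith [hsum, htt]
  calc P {ω | a ≤ ∑ j, L j ω}
      = ENNReal.ofReal ((P {ω | a ≤ ∑ j, L j ω}).toReal) :=
        (ENNReal.ofReal_toReal (measure_ne_top _ _)).symm
    _ ≤ ENNReal.ofReal (Real.exp (u₁ * (y * (1 - Real.log y) - 1))) :=
        ENNReal.ofReal_le_ofReal hreal
end

section
/- Let λ_1, ..., λ_m be independent random variables, each taking values in {−1, +1}, with P(λ_j = +1) = p_j ∈ [0,1]. Set u₁ = Σ_{j=1}^m p_j, u₂ = 2u₁ − m, and β = m/(2u₁), and assume u₁ > 0 and u₂ ≥ 0. Then for every δ ≥ 0, P(Σ_{j=1}^m λ_j ≥ (1+δ) u₂) ≤ exp(− u₁ δ²(1 − β)² / (2(1 + δ(1 − β)))). -/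
open MeasureTheory ProbabilityTheory

/-- Key analytic estimate: for `0 ≤ s ≤ 1`, `e^s (1-s) ≤ 1 - s²/2`. -/
lemma stmt_11_key_exp {s : ℝ} (h0 : 0 ≤ s) (h1 : s ≤ 1) :
    Real.exp s * (1 - s) ≤ 1 - s ^ 2 / 2 := by
  have hb := Real.exp_bound' h0 h1 (n := 4) (by norm_num)
  norm_num [Finset.sum_range_succ, Nat.factorial] at hb
  nlinarith [pow_nonneg h0 3, pow_nonneg h0 4, pow_nonneg h0 5, sq_nonneg s,
    mul_le_mul_of_nonneg_right hb (by linarith : (0:ℝ) ≤ 1 - s)]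

/-- Quantitative upper-tail bound (rigorous form of Theorem 2,
upper tail, case `s_w ≥ 0`): for independent ±1-valued `λ_j` with
`P(λ_j = +1) = p_j`, `u₁ = ∑ p_j > 0`, `u₂ = 2u₁ − m ≥ 0`, `β = m/(2u₁)`,
and every `δ ≥ 0`,
`P(∑ λ_j ≥ (1+δ)u₂) ≤ exp(−u₁ δ²(1−β)²/(2(1 + δ(1−β))))`. -/
theorem stmt_11 {Ω : Type*} [MeasurableSpace Ω] (P : Measure Ω) [IsProbabilityMeasure P]
    (m : ℕ) (L : Fin m → Ω → ℝ) (hLmeas : ∀ j, Measurable (L j))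
    (hindep : iIndepFun L P)
    (hval : ∀ j ω, L j ω = 1 ∨ L j ω = -1)
    (p : Fin m → ℝ) (hp : ∀ j, p j ∈ Set.Icc (0 : ℝ) 1)
    (hP : ∀ j, P {ω | L j ω = 1} = ENNReal.ofReal (p j))
    (u₁ u₂ β : ℝ) (hu₁ : u₁ = ∑ j, p j) (hu₁pos : 0 < u₁)
    (hu₂ : u₂ = 2 * u₁ - m) (hu₂nonneg : 0 ≤ u₂)
    (hβ : β = (m : ℝ) / (2 * u₁))
    (δ : ℝ) (hδ : 0 ≤ δ) :
    P {ω | (1 + δ) * u₂ ≤ ∑ j, L j ω}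
      ≤ ENNReal.ofReal
          (Real.exp (-(u₁ * δ ^ 2 * (1 - β) ^ 2 / (2 * (1 + δ * (1 - β)))))) := by
  classical
  have hu₁ne : u₁ ≠ 0 := ne_of_gt hu₁pos
  have h2u : (2:ℝ) * u₁ ≠ 0 := by positivity
  have h1β : 1 - β = u₂ / (2 * u₁) := by rw [hβ, hu₂]; field_simp
  have h1βnn : 0 ≤ 1 - β := by rw [h1β]; positivity
  set y : ℝ := 1 + δ * (1 - β) with hy
  have hy1 : 1 ≤ y := by rw [hy]; nlinarith [mul_nonneg hδ h1βnn]
  have hy0 : (0:ℝ) < y := by linarith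
  have hyne : y ≠ 0 := ne_of_gt hy0
  set s : ℝ := (y - 1) / y with hsdef
  set t : ℝ := s / 2 with htdef
  have hs0 : 0 ≤ s := by rw [hsdef]; exact div_nonneg (by linarith) hy0.le
  have hs1 : s ≤ 1 := by rw [hsdef]; exact (div_le_one hy0).2 (by linarith)
  have ht0 : 0 ≤ t := by rw [htdef]; linarith
  -- measurability of the sets {L j = 1}
  have hmeas1 : ∀ j, MeasurableSet {ω | L j ω = 1} := fun j =>
    (hLmeas j) (measurableSet_singleton 1)
  -- mgf of each L j
  have hmgfj : ∀ j, mgf (L j) P t = p j * Real.exp t + (1 - p j) * Real.exp (-t) := by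
    intro j
    have hfun : (fun ω => Real.exp (t * L j ω))
        = fun ω => ({ω | L j ω = 1} : Set Ω).indicator
            (fun _ => Real.exp t - Real.exp (-t)) ω + Real.exp (-t) := by
      funext ω
      rcases hval j ω with h | h
      · rw [Set.indicator_of_mem (by exact h), h, mul_one]; ring
      · rw [Set.indicator_of_notMem (by simp [Set.mem_setOf_eq, h]; norm_num), h,
          mul_neg_one]; ring
    have : mgf (L j) P t = ∫ ω, Real.exp (t * L j ω) ∂P := rfl
    rw [this, hfun,
      integral_add ((integrable_const _).indicator (hmeas1 j)) (integrable_const _),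
      integral_indicator_const _ (hmeas1 j), integral_const]
    simp [measureReal_def, hP j, ENNReal.toReal_ofReal (hp j).1]
    ring
  -- integrability of exp (t * ∑ L)
  have hSapp : (∑ j, L j) = fun ω => ∑ j, L j ω := by
    funext ω; simp [Finset.sum_apply]
  have hmeasSum : Measurable (fun ω => Real.exp (t * (∑ j, L j) ω)) := by
    rw [hSapp]
    exact ((Finset.measurable_sum Finset.univ (fun j _ => hLmeas j)).const_mul t).exp
  have hbound : ∀ ω, ‖Real.exp (t * (∑ j, L j) ω)‖ ≤ Real.exp (t * m) := by
    intro ω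
    rw [Real.norm_eq_abs, Real.abs_exp]
    refine Real.exp_le_exp.2 (mul_le_mul_of_nonneg_left ?_ ht0)
    have : (∑ j, L j) ω = ∑ j, L j ω := by simp [Finset.sum_apply]
    rw [this]
    calc ∑ j, L j ω ≤ ∑ _j : Fin m, (1:ℝ) :=
          Finset.sum_le_sum fun j _ => by rcases hval j ω with h | h <;> rw [h] <;> norm_num
      _ = m := by simp
  have hintsum : Integrable (fun ω => Real.exp (t * (∑ j, L j) ω)) P :=
    (integrable_const (Real.exp (t * m))).mono' hmeasSum.aestronglyMeasurable
      (ae_of_all _ hbound)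
  -- Chernoff bound
  have hch := measure_ge_le_exp_mul_mgf (μ := P) (X := ∑ j, L j) ((1 + δ) * u₂) ht0 hintsum
  rw [hindep.mgf_sum hLmeas Finset.univ] at hch
  simp only [Finset.sum_apply] at hch
  rw [← ENNReal.ofReal_toReal (measure_ne_top P {ω | (1 + δ) * u₂ ≤ ∑ j, L j ω})]
  apply ENNReal.ofReal_le_ofReal
  refine hch.trans ?_
  simp only [hmgfj]
  -- bound each factor of the product
  have hfac : ∀ j : Fin m, p j * Real.exp t + (1 - p j) * Real.exp (-t)
      ≤ Real.exp (-t + p j * (Real.exp (2*t) - 1)) := by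
    intro j
    have hE : Real.exp (-t) * Real.exp (2*t) = Real.exp t := by
      rw [← Real.exp_add]; congr 1; ring
    have h1 : p j * Real.exp t + (1 - p j) * Real.exp (-t)
        = Real.exp (-t) * (1 + p j * (Real.exp (2*t) - 1)) := by
      linear_combination (-(p j)) * hE
    rw [h1, Real.exp_add]
    refine mul_le_mul_of_nonneg_left ?_ (Real.exp_pos _).le
    linarith [Real.add_one_le_exp (p j * (Real.exp (2*t) - 1))]
  have hprod : ∏ j, (p j * Real.exp t + (1 - p j) * Real.exp (-t))
      ≤ ∏ j, Real.exp (-t + p j * (Real.exp (2*t) - 1)) := by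
    refine Finset.prod_le_prod (fun j _ => ?_) (fun j _ => hfac j)
    have h1 := mul_nonneg (hp j).1 (Real.exp_pos t).le
    have h2 := mul_nonneg (by linarith [(hp j).2] : (0:ℝ) ≤ 1 - p j) (Real.exp_pos (-t)).le
    linarith
  rw [← Real.exp_sum] at hprod
  have hsum : ∑ j : Fin m, (-t + p j * (Real.exp (2*t) - 1))
      = -t * m + u₁ * (Real.exp (2*t) - 1) := by
    rw [Finset.sum_add_distrib, Finset.sum_const, ← Finset.sum_mul, ← hu₁, Finset.card_univ,
      Fintype.card_fin, nsmul_eq_mul]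
    ring
  rw [hsum] at hprod
  -- final analytic estimate
  have h2t : 2 * t = s := by rw [htdef]; ring
  have hk := stmt_11_key_exp hs0 hs1
  have h1s : 1 - s = 1 / y := by rw [hsdef]; field_simp; ring
  have hexp2t : Real.exp (2*t) ≤ y - (y-1)^2/(2*y) := by
    rw [h2t]
    have h2 : Real.exp s * (1/y) ≤ 1 - s^2/2 := by rw [← h1s]; exact hk
    have h3 : Real.exp s ≤ (1 - s^2/2) * y := by
      have h5 := mul_le_mul_of_nonneg_right h2 hy0.le
      calc Real.exp s = Real.exp s * (1/y) * y := by field_simp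
        _ ≤ (1 - s^2/2) * y := h5
    have h4 : (1 - s^2/2) * y = y - (y-1)^2/(2*y) := by
      rw [hsdef]; field_simp
    linarith [h4.ge, h4.le]
  have hid1 : (1+δ)*u₂ + m = 2*u₁*y := by
    rw [hu₂, hy, hβ]; field_simp; ring
  have hid2 : t * (2*u₁*y) = u₁*(y-1) := by
    rw [htdef, hsdef]; field_simp
  have hid3 : t * ((1+δ)*u₂) + t * (m:ℝ) = u₁*(y-1) := by
    rw [← hid2, ← hid1]; ring
  have hy1' : y - 1 = δ * (1-β) := by rw [hy]; ring
  have hrhs : u₁*δ^2*(1-β)^2/(2*y) = u₁*(y-1)^2/(2*y) := by rw [hy1']; ring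
  have hmul : u₁*(Real.exp (2*t) - 1) ≤ u₁*(y - 1 - (y-1)^2/(2*y)) :=
    mul_le_mul_of_nonneg_left (by linarith) hu₁pos.le
  have hfinal : -t * ((1+δ)*u₂) + (-t*(m:ℝ) + u₁*(Real.exp (2*t) - 1))
      ≤ -(u₁ * δ^2 * (1-β)^2 / (2*y)) := by
    rw [hrhs]
    have h3 : -t * ((1+δ)*u₂) + (-t*(m:ℝ) + u₁*(y - 1 - (y-1)^2/(2*y)))
        = -(u₁ * (y-1)^2 / (2*y)) := by linear_combination -hid3
    linarith [hmul, h3]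
  calc Real.exp (-t * ((1+δ)*u₂)) * ∏ j, (p j * Real.exp t + (1 - p j) * Real.exp (-t))
      ≤ Real.exp (-t * ((1+δ)*u₂)) * Real.exp (-t*(m:ℝ) + u₁*(Real.exp (2*t) - 1)) :=
        mul_le_mul_of_nonneg_left hprod (Real.exp_pos _).le
    _ = Real.exp (-t * ((1+δ)*u₂) + (-t*(m:ℝ) + u₁*(Real.exp (2*t) - 1))) :=
        (Real.exp_add _ _).symm
    _ ≤ Real.exp (-(u₁ * δ ^ 2 * (1 - β) ^ 2 / (2 * y))) := Real.exp_le_exp.2 hfinal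
end
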